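/- Let b₁,…,bₙ be pairwise disjoint sets (possibly infinite), k₁,…,kₙ, l₁,…,lₙ natural numbers, and p₁,…,pₙ, q₁,…,qₙ booleans. There exists a set y such that for each i: (bᵢ ∩ y is finite ↔ pᵢ), (bᵢ \ y is finite ↔ qᵢ), and if pᵢ then |bᵢ ∩ y| = kᵢ, and if qᵢ then |bᵢ \ y| = lᵢ, if and only if for each i: (bᵢ is finite ↔ pᵢ ∧ qᵢ) and (pᵢ ∧ qᵢ → |bᵢ| = kᵢ + lᵢ). -/

import Mathlib

open Set

lemma split_infinite_aux {α : Type*} {s : Set α} (hs : s.Infinite) :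
    ∃ t ⊆ s, t.Infinite ∧ (s \ t).Infinite := by
  let f := hs.natEmbedding
  refine ⟨Set.range (fun n => (f (2*n) : α)), ?_, ?_, ?_⟩
  · rintro x ⟨n, rfl⟩; exact (f (2*n)).2
  · apply Set.infinite_range_of_injective
    intro a b hab
    have := f.injective (Subtype.ext hab)
    omega
  · apply Set.infinite_of_injective_forall_mem (f := fun n : ℕ => (f (2*n+1) : α))
    · intro a b hab
      have := f.injective (Subtype.ext hab); omega
    · intro n
      refine ⟨(f (2*n+1)).2, ?_⟩
      rintro ⟨m, hm⟩
      have := f.injective (Subtype.ext hm); omega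

lemma per_index_aux {α : Type*} (b : Set α) (k l : ℕ) (p q : Prop)
    (h1 : b.Finite ↔ (p ∧ q)) (h2 : p ∧ q → b.ncard = k + l) :
    ∃ y ⊆ b, (y.Finite ↔ p) ∧ ((b \ y).Finite ↔ q) ∧
      (p → y.ncard = k) ∧ (q → (b \ y).ncard = l) := by
  by_cases hb : b.Finite
  · obtain ⟨hp, hq⟩ := h1.mp hb
    have hcard := h2 ⟨hp, hq⟩
    have hk : k ≤ b.ncard := by omega
    obtain ⟨t, hts, htc⟩ := Set.exists_subset_card_eq hk
    refine ⟨t, hts, ?_, ?_, fun _ => htc, fun _ => ?_⟩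
    · exact iff_of_true (hb.subset hts) hp
    · exact iff_of_true hb.diff hq
    · rw [Set.ncard_diff hts (hb.subset hts), htc, hcard]; omega
  · have hpq : ¬ (p ∧ q) := fun h => hb (h1.mpr h)
    have hbi : b.Infinite := hb
    by_cases hp : p
    · have hq : ¬ q := fun hq => hpq ⟨hp, hq⟩
      obtain ⟨t, hts, htf, htc⟩ := hbi.exists_subset_ncard_eq k
      refine ⟨t, hts, iff_of_true htf hp, iff_of_false ?_ hq, fun _ => htc, fun h => absurd h hq⟩
      exact hbi.diff htf
    · by_cases hq : q
      · obtain ⟨t, hts, htf, htc⟩ := hbi.exists_subset_ncard_eq l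
        refine ⟨b \ t, Set.diff_subset, iff_of_false (hbi.diff htf) hp, ?_⟩
        have hdd : b \ (b \ t) = t := by
          rw [Set.diff_diff_right_self, Set.inter_eq_self_of_subset_right hts]
        rw [hdd]
        exact ⟨iff_of_true htf hq, fun h => absurd h hp, fun _ => htc⟩
      · obtain ⟨t, hts, hti, htdi⟩ := split_infinite_aux hbi
        exact ⟨t, hts, iff_of_false hti hp, iff_of_false htdi hq,
          fun h => absurd h hp, fun h => absurd h hq⟩

theorem stmt_4 {α : Type*} (n : ℕ) (b : Fin n → Set α)
    (hd : Pairwise (Function.onFun Disjoint b)) (k l : Fin n → ℕ) (p q : Fin n → Prop) :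
    (∃ y : Set α, ∀ i,
        ((b i ∩ y).Finite ↔ p i) ∧ ((b i \ y).Finite ↔ q i) ∧
        (p i → (b i ∩ y).ncard = k i) ∧ (q i → (b i \ y).ncard = l i)) ↔
      ∀ i, ((b i).Finite ↔ (p i ∧ q i)) ∧ (p i ∧ q i → (b i).ncard = k i + l i) := by
  constructor
  · rintro ⟨y, hy⟩ i
    obtain ⟨h1, h2, h3, h4⟩ := hy i
    have hsplit : b i = (b i ∩ y) ∪ (b i \ y) := (Set.inter_union_diff _ _).symm
    have hdisj : Disjoint (b i ∩ y) (b i \ y) := by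
      apply Set.disjoint_left.mpr
      rintro x ⟨-, hxy⟩ ⟨-, hxy'⟩
      exact hxy' hxy
    constructor
    · rw [hsplit, Set.finite_union, h1, h2]
    · rintro ⟨hp, hq⟩
      rw [hsplit, Set.ncard_union_eq hdisj (h1.mpr hp) (h2.mpr hq), h3 hp, h4 hq]
  · intro h
    choose f hfs hf1 hf2 hf3 hf4 using fun i => per_index_aux (b i) (k i) (l i) (p i) (q i) (h i).1 (h i).2
    refine ⟨⋃ j, f j, fun i => ?_⟩
    have hint : b i ∩ (⋃ j, f j) = f i := by
      ext x
      simp only [Set.mem_inter_iff, Set.mem_iUnion]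
      constructor
      · rintro ⟨hxb, j, hxf⟩
        rcases eq_or_ne j i with rfl | hne
        · exact hxf
        · exact absurd hxb (Set.disjoint_left.mp (hd hne) (hfs j hxf))
      · exact fun hx => ⟨hfs i hx, i, hx⟩
    have hdiff : b i \ (⋃ j, f j) = b i \ f i := by
      rw [Set.diff_eq, Set.diff_eq, ← hint]
      ext x
      simp only [Set.mem_inter_iff, Set.mem_compl_iff]
      tauto
    rw [hint, hdiff]
    exact ⟨hf1 i, hf2 i, hf3 i, hf4 i⟩
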